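/- Let H be the group with presentation ⟨aₙ (n ∈ ℤ) | a_{n+1}(aₙ a_{n+2}) a_{n+1}⁻¹ = (aₙ a_{n+2})² for all n ∈ ℤ⟩, and for n ≥ 2 let c = a_{n−1} and x = a_{n−2} a_n in H. Then the homomorphism from the Baumslag–Solitar group BS(1,2) = ⟨α, β | α β α⁻¹ = β²⟩ to H sending α to c and β to x is injective; in particular, the subgroup of H generated by c and x is isomorphic to BS(1,2). -/

import Mathlib

namespace BSinH

/-- The relators `a_{n+1} (aₙ a_{n+2}) a_{n+1}⁻¹ ((aₙ a_{n+2})²)⁻¹`, `n ∈ ℤ`, on the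
generators `aₙ`, `n ∈ ℤ`. -/
def Hrels : Set (FreeGroup ℤ) :=
  {r | ∃ n : ℤ, r = FreeGroup.of (n + 1) * (FreeGroup.of n * FreeGroup.of (n + 2)) *
    (FreeGroup.of (n + 1))⁻¹ * ((FreeGroup.of n * FreeGroup.of (n + 2)) ^ 2)⁻¹}

/-- `H = ⟨aₙ (n ∈ ℤ) | a_{n+1}(aₙ a_{n+2})a_{n+1}⁻¹ = (aₙ a_{n+2})² for all n ∈ ℤ⟩`. -/
abbrev H : Type := PresentedGroup Hrels

/-- The single relator `α β α⁻¹ β⁻²` of the Baumslag–Solitar group `BS(1,2)`, with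
`α = of true` and `β = of false`. -/
def bsRels : Set (FreeGroup Bool) :=
  {FreeGroup.of true * FreeGroup.of false * (FreeGroup.of true)⁻¹ *
    ((FreeGroup.of false) ^ 2)⁻¹}

/-- The Baumslag–Solitar group `BS(1,2) = ⟨α, β | α β α⁻¹ = β²⟩`. -/
abbrev BS : Type := PresentedGroup bsRels

lemma mk_rel_one {β : Type*} (rels : Set (FreeGroup β)) {r : FreeGroup β} (h : r ∈ rels) :
    PresentedGroup.mk rels r = 1 :=
  (QuotientGroup.eq_one_iff _).mpr (Subgroup.subset_normalClosure h)

lemma bs_rel : (PresentedGroup.of true : BS) * PresentedGroup.of false *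
    (PresentedGroup.of true : BS)⁻¹ * ((PresentedGroup.of false : BS) ^ 2)⁻¹ = 1 := by
  have h := mk_rel_one bsRels (Set.mem_singleton _)
  simp only [map_mul, map_inv, map_pow] at h
  exact h

lemma H_rel (n : ℤ) : (PresentedGroup.of (n - 1) : H) *
    (PresentedGroup.of (n - 2) * PresentedGroup.of n) *
    (PresentedGroup.of (n - 1) : H)⁻¹ *
    (((PresentedGroup.of (n - 2) : H) * PresentedGroup.of n) ^ 2)⁻¹ = 1 := by
  have hmem : (FreeGroup.of (n - 1) * (FreeGroup.of (n - 2) * FreeGroup.of n) *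
      (FreeGroup.of (n - 1))⁻¹ * ((FreeGroup.of (n - 2) * FreeGroup.of n) ^ 2)⁻¹) ∈ Hrels :=
    ⟨n - 2, by rw [show n - 2 + 1 = n - 1 by ring, show n - 2 + 2 = n by ring]⟩
  have h := mk_rel_one Hrels hmem
  simp only [map_mul, map_inv, map_pow] at h
  exact h

/-- retraction data: image of the generator `a_k` of `H` in `BS`. -/
noncomputable def Phi (n k : ℤ) : BS :=
  if Even (k - n) then
    (if n ≤ k then 1 else (PresentedGroup.of false : BS) ^ (((k - n) / 2 + 1).negOnePow : ℤ))
  else (PresentedGroup.of true : BS) ^ (((k - n + 1) / 2).negOnePow : ℤ)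

lemma Phi_nsub1 (n : ℤ) : Phi n (n - 1) = PresentedGroup.of true := by
  have h : n - 1 - n = -1 := by ring
  have hne : ¬ Even (-1 : ℤ) := by decide
  rw [Phi, h, if_neg hne, show ((-1 : ℤ) + 1) / 2 = 0 by decide, Int.negOnePow_zero,
    Units.val_one, zpow_one]

lemma Phi_nsub2 (n : ℤ) : Phi n (n - 2) = PresentedGroup.of false := by
  have h : n - 2 - n = -2 := by ring
  rw [Phi, h, if_pos ⟨-1, by ring⟩, if_neg (by omega),
    show (-2 : ℤ) / 2 + 1 = 0 by decide, Int.negOnePow_zero, Units.val_one, zpow_one]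

lemma Phi_self (n : ℤ) : Phi n n = 1 := by
  rw [Phi, sub_self, if_pos ⟨0, by ring⟩, if_pos le_rfl]

lemma Phi_mul (n m : ℤ) (hm : m ≠ n - 2) : Phi n m * Phi n (m + 2) = 1 := by
  rcases Int.even_or_odd (m - n) with ⟨j, hj⟩ | ⟨j, hj⟩
  · have h2 : Even (m + 2 - n) := ⟨j + 1, by omega⟩
    by_cases hnm : n ≤ m
    · rw [Phi, Phi, if_pos ⟨j, hj⟩, if_pos h2, if_pos hnm, if_pos (by omega), one_mul]
    · have e1 : (m - n) / 2 + 1 = j + 1 := by omega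
      have e2 : (m + 2 - n) / 2 + 1 = (j + 1) + 1 := by omega
      rw [Phi, Phi, if_pos ⟨j, hj⟩, if_pos h2, if_neg hnm, if_neg (by omega), e1, e2,
        Int.negOnePow_succ (j + 1), Units.val_neg, zpow_neg, mul_inv_cancel]
  · have hne1 : ¬ Even (m - n) := by rw [← Int.not_odd_iff_even]; exact fun h => h ⟨j, hj⟩
    have hne2 : ¬ Even (m + 2 - n) := by
      rw [← Int.not_odd_iff_even]; exact fun h => h ⟨j + 1, by omega⟩
    have e1 : (m - n + 1) / 2 = j + 1 := by omega
    have e2 : (m + 2 - n + 1) / 2 = (j + 1) + 1 := by omega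
    rw [Phi, Phi, if_neg hne1, if_neg hne2, e1, e2, Int.negOnePow_succ (j + 1),
      Units.val_neg, zpow_neg, mul_inv_cancel]

lemma Phi_lift (n : ℤ) : ∀ r ∈ Hrels, FreeGroup.lift (Phi n) r = 1 := by
  rintro r ⟨m, rfl⟩
  simp only [map_mul, map_inv, map_pow, FreeGroup.lift_apply_of]
  by_cases hm : m = n - 2
  · subst hm
    rw [show n - 2 + 1 = n - 1 by ring, show n - 2 + 2 = n by ring, Phi_nsub1, Phi_nsub2,
      Phi_self, mul_one]
    exact bs_rel
  · rw [Phi_mul n m hm]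
    group

end BSinH

open BSinH in
/-- For `n ≥ 2`, with `c = a_{n-1}` and `x = a_{n-2} aₙ` in `H`, the homomorphism
`BS(1,2) → H` sending `α ↦ c` and `β ↦ x` is injective; in particular the subgroup of `H`
generated by `c` and `x` is isomorphic to `BS(1,2)`. -/
theorem bs_embeds_in_H (n : ℤ) (hn : 2 ≤ n) :
    ∃ f : BS →* H,
      f (PresentedGroup.of true) = PresentedGroup.of (n - 1) ∧
      f (PresentedGroup.of false) = PresentedGroup.of (n - 2) * PresentedGroup.of n ∧
      Function.Injective f ∧
      Nonempty (BS ≃* Subgroup.closure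
        {(PresentedGroup.of (n - 1) : H),
          PresentedGroup.of (n - 2) * PresentedGroup.of n}) := by
  set c : H := PresentedGroup.of (n - 1) with hc
  set x : H := PresentedGroup.of (n - 2) * PresentedGroup.of n with hx
  have hF : ∀ r ∈ bsRels, FreeGroup.lift (fun b : Bool => if b then c else x) r = 1 := by
    rintro r hr
    simp only [bsRels, Set.mem_singleton_iff] at hr
    subst hr
    simp only [map_mul, map_inv, map_pow, FreeGroup.lift_apply_of, if_true, if_false]
    exact H_rel n
  set f : BS →* H := PresentedGroup.toGroup hF with hfdef
  have hft : f (PresentedGroup.of true) = c := by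
    simp [hfdef, PresentedGroup.toGroup.of]
  have hff : f (PresentedGroup.of false) = x := by
    simp [hfdef, PresentedGroup.toGroup.of]
  have hcomp : (PresentedGroup.toGroup (Phi_lift n)).comp f = MonoidHom.id BS := by
    apply PresentedGroup.ext
    intro b
    cases b
    · simp only [MonoidHom.comp_apply, MonoidHom.id_apply, hff, hx, map_mul,
        PresentedGroup.toGroup.of]
      rw [Phi_nsub2, Phi_self, mul_one]
    · simp only [MonoidHom.comp_apply, MonoidHom.id_apply, hft, hc,
        PresentedGroup.toGroup.of]
      exact Phi_nsub1 n
  have hli : Function.LeftInverse (PresentedGroup.toGroup (Phi_lift n)) f := fun y => by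
    have h := DFunLike.congr_fun hcomp y
    simpa using h
  have hinj : Function.Injective f := hli.injective
  have hrange : f.range = Subgroup.closure {c, x} := by
    rw [MonoidHom.range_eq_map, ← PresentedGroup.closure_range_of bsRels,
      MonoidHom.map_closure]
    congr 1
    ext y
    simp only [Set.mem_image, Set.mem_range, Set.mem_insert_iff, Set.mem_singleton_iff]
    constructor
    · rintro ⟨_, ⟨b, rfl⟩, rfl⟩
      cases b
      · exact Or.inr hff
      · exact Or.inl hft
    · rintro (rfl | rfl)
      exacts [⟨_, ⟨true, rfl⟩, hft⟩, ⟨_, ⟨false, rfl⟩, hff⟩]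
  exact ⟨f, hft, hff, hinj,
    ⟨(MonoidHom.ofInjective hinj).trans (MulEquiv.subgroupCongr hrange)⟩⟩
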